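/- arXiv:2202.05617 — 2 statements merged into one kernel-verified Lean document; each statement's English description precedes it below -/
import Mathlib

section
/- Faà di Bruno's formula: if g(x) = Σ_{n≥0} b_n x^n/n! and f(x) = Σ_{n≥1} a_n x^n/n! are formal exponential power series (f with zero constant term), then the composition g∘f satisfies (g∘f)(x) = b₀ + Σ_{n≥1} (Σ_{k=1}^{n} b_k · B_{n,k}(a₁,…,a_{n−k+1})) · x^n/n!, where B_{n,k} is the partial exponential Bell polynomial. -/
open Finset

noncomputable def bellPoly {R : Type*} [CommRing R] [Algebra ℚ R] (m j : ℕ) (x : ℕ → R) : R :=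
  ∑ lam : Nat.Partition m,
    if Multiset.card lam.parts = j then
      ((m.factorial : ℚ) / ∏ i ∈ Icc 1 m,
          ((i.factorial : ℚ) ^ (Multiset.count i lam.parts) *
            ((Multiset.count i lam.parts).factorial : ℚ))) •
        ∏ i ∈ Icc 1 m, x i ^ (Multiset.count i lam.parts)
    else 0

namespace FaaAux

/-- value multiset of a tuple -/
def vm {k : ℕ} (v : Fin k → ℕ) : Multiset ℕ := Multiset.map v Finset.univ.val

lemma vm_card {k : ℕ} (v : Fin k → ℕ) : Multiset.card (vm v) = k := by
  simp [vm]

lemma vm_sum {k : ℕ} (v : Fin k → ℕ) : (vm v).sum = ∑ i : Fin k, v i := by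
  simp [vm, Finset.sum]

lemma mem_vm {k : ℕ} (v : Fin k → ℕ) (x : ℕ) : x ∈ vm v ↔ ∃ i, v i = x := by
  rw [vm, Multiset.mem_map]
  simp

lemma vm_cons {k : ℕ} (x : ℕ) (v : Fin k → ℕ) :
    vm (Fin.cons x v) = x ::ₘ vm v := by
  unfold vm
  rw [Fin.univ_succ, Finset.cons_val, Multiset.map_cons, Fin.cons_zero, Finset.map_val,
    Multiset.map_map]
  exact congrArg (x ::ₘ ·) (Multiset.map_congr rfl (fun i _ => rfl))

/-- the tuples with a given value multiset -/
noncomputable def Ftup (k : ℕ) (s : Multiset ℕ) : Finset (Fin k → ℕ) := by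
  classical
  exact (Fintype.piFinset fun _ => s.toFinset).filter (fun v => vm v = s)

lemma mem_Ftup {k : ℕ} {s : Multiset ℕ} {v : Fin k → ℕ} : v ∈ Ftup k s ↔ vm v = s := by
  classical
  simp only [Ftup, mem_filter, Fintype.mem_piFinset, Multiset.mem_toFinset, and_iff_right_iff_imp]
  intro h i
  rw [← h, mem_vm]
  exact ⟨i, rfl⟩

lemma prod_count_factorial_subset (s : Multiset ℕ) (t : Finset ℕ) (h : s.toFinset ⊆ t) :
    ∏ y ∈ t, (Multiset.count y s).factorial = ∏ y ∈ s.toFinset, (Multiset.count y s).factorial := by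
  refine (Finset.prod_subset h fun y _ hy => ?_).symm
  rw [Multiset.count_eq_zero_of_notMem (by simpa using hy)]
  rfl

lemma Ftup_card : ∀ (k : ℕ) (s : Multiset ℕ), Multiset.card s = k →
    (Ftup k s).card * ∏ y ∈ s.toFinset, (Multiset.count y s).factorial = k.factorial := by
  intro k
  induction k with
  | zero =>
    intro s hs
    rw [Multiset.card_eq_zero] at hs
    subst hs
    have h1 : Ftup 0 (0 : Multiset ℕ) = {finZeroElim} := by
      ext v
      simp only [mem_Ftup, Finset.mem_singleton]
      constructor
      · intro _; exact Subsingleton.elim _ _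
      · intro h; subst h; rfl
    simp [h1]
  | succ k ih =>
    intro s hs
    classical
    have hbU : Ftup (k + 1) s
        = s.toFinset.biUnion (fun x => (Ftup k (s.erase x)).image (Fin.cons x)) := by
      ext v
      simp only [mem_Ftup, Finset.mem_biUnion, Finset.mem_image, Multiset.mem_toFinset]
      constructor
      · intro hv
        refine ⟨v 0, ?_, Fin.tail v, ?_, (Fin.cons_self_tail v)⟩
        · rw [← hv, mem_vm]; exact ⟨0, rfl⟩
        · have h2 : vm v = (v 0) ::ₘ vm (Fin.tail v) := by
            conv_lhs => rw [← Fin.cons_self_tail v]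
            rw [vm_cons]
          have := hv
          rw [h2] at this
          rw [← this, Multiset.erase_cons_head]
      · rintro ⟨x, hx, w, hw, rfl⟩
        rw [vm_cons, hw, Multiset.cons_erase hx]
    have hdisj : ∀ x ∈ s.toFinset, ∀ y ∈ s.toFinset, x ≠ y →
        Disjoint ((Ftup k (s.erase x)).image (Fin.cons (α := fun _ => ℕ) x))
          ((Ftup k (s.erase y)).image (Fin.cons (α := fun _ => ℕ) y)) := by
      intro x _ y _ hxy
      rw [Finset.disjoint_left]
      rintro v hv hv'
      rw [Finset.mem_image] at hv hv'
      obtain ⟨w, _, rfl⟩ := hv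
      obtain ⟨w', _, h⟩ := hv'
      apply hxy
      have := congrFun h 0
      simpa using this.symm
    have hcard : (Ftup (k + 1) s).card
        = ∑ x ∈ s.toFinset, (Ftup k (s.erase x)).card := by
      rw [hbU, Finset.card_biUnion hdisj]
      refine Finset.sum_congr rfl fun x _ => ?_
      exact Finset.card_image_of_injective _ (Fin.cons_right_injective (α := fun _ => ℕ) x)
    rw [hcard, Finset.sum_mul]
    have hterm : ∀ x ∈ s.toFinset,
        (Ftup k (s.erase x)).card * ∏ y ∈ s.toFinset, (Multiset.count y s).factorial
          = Multiset.count x s * k.factorial := by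
      intro x hx
      have hxs : x ∈ s := Multiset.mem_toFinset.mp hx
      have hcx : 1 ≤ Multiset.count x s := Multiset.one_le_count_iff_mem.mpr hxs
      have hsub : (s.erase x).toFinset ⊆ s.toFinset :=
        Multiset.toFinset_subset.mpr (fun y hy => Multiset.mem_of_mem_erase hy)
      have hIH : (Ftup k (s.erase x)).card
          * ∏ y ∈ s.toFinset, (Multiset.count y (s.erase x)).factorial = k.factorial := by
        rw [prod_count_factorial_subset _ _ hsub]
        exact ih (s.erase x) (by rw [Multiset.card_erase_of_mem hxs, hs]; rfl)
      have hprod : ∏ y ∈ s.toFinset, (Multiset.count y s).factorial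
          = Multiset.count x s * ∏ y ∈ s.toFinset, (Multiset.count y (s.erase x)).factorial := by
        rw [← Finset.mul_prod_erase s.toFinset _ hx,
            ← Finset.mul_prod_erase s.toFinset (fun y => (Multiset.count y (s.erase x)).factorial) hx]
        have h1 : ∀ y ∈ s.toFinset.erase x,
            (Multiset.count y (s.erase x)).factorial = (Multiset.count y s).factorial := by
          intro y hy
          rw [Multiset.count_erase_of_ne (Finset.ne_of_mem_erase hy)]
        rw [Finset.prod_congr rfl h1, Multiset.count_erase_self, ← mul_assoc]
        congr 1
        obtain ⟨c, hc⟩ : ∃ c, Multiset.count x s = c + 1 :=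
          ⟨Multiset.count x s - 1, by omega⟩
        rw [hc]
        simp [Nat.factorial_succ]
      rw [hprod, ← mul_assoc, mul_comm ((Ftup k (s.erase x)).card) (Multiset.count x s),
          mul_assoc, hIH]
    rw [Finset.sum_congr rfl hterm, ← Finset.sum_mul, Multiset.toFinset_sum_count_eq, hs,
        Nat.factorial_succ]

section PS
variable {R : Type*} [CommRing R]


lemma coeff_pow_tuple (φ : PowerSeries R) (k n : ℕ) :
    PowerSeries.coeff n (φ ^ k)
      = ∑ v ∈ Finset.Nat.antidiagonalTuple k n, ∏ i : Fin k, PowerSeries.coeff (v i) φ := by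
  classical
  rw [PowerSeries.coeff_pow]
  refine Finset.sum_nbij' (fun l (i : Fin k) => l i.val)
    (fun v => Finsupp.embDomain ⟨Fin.val, Fin.val_injective⟩ (Finsupp.equivFunOnFinite.symm v))
    ?_ ?_ ?_ ?_ ?_
  · intro l hl
    rw [Finset.mem_finsuppAntidiag] at hl
    rw [Finset.Nat.mem_antidiagonalTuple]
    rw [Fin.sum_univ_eq_sum_range (fun m => l m) k]
    exact hl.1
  · intro v hv
    rw [Finset.Nat.mem_antidiagonalTuple] at hv
    rw [Finset.mem_finsuppAntidiag]
    constructor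
    · have hr : range k = Finset.map ⟨Fin.val, Fin.val_injective⟩ (Finset.univ : Finset (Fin k)) := by
        rw [show (⟨Fin.val, Fin.val_injective⟩ : Fin k ↪ ℕ) = Fin.valEmbedding from rfl,
          Fin.map_valEmbedding_univ]
        rw [Nat.Iio_eq_range]
      rw [hr, Finset.sum_map]
      rw [← hv]
      refine Finset.sum_congr rfl fun i _ => ?_
      rw [Finsupp.embDomain_apply_self]
      exact Finsupp.equivFunOnFinite_symm_apply_apply v i
    · rw [Finsupp.support_embDomain]
      intro m hm
      rw [Finset.mem_map] at hm
      obtain ⟨i, _, rfl⟩ := hm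
      exact Finset.mem_range.mpr i.isLt
  · intro l hl
    rw [Finset.mem_finsuppAntidiag] at hl
    ext m
    by_cases hm : m < k
    · have : m = (⟨m, hm⟩ : Fin k).val := rfl
      rw [this]
      show (Finsupp.embDomain ⟨Fin.val, Fin.val_injective⟩
        (Finsupp.equivFunOnFinite.symm fun i : Fin k => l i.val))
          ((⟨Fin.val, Fin.val_injective⟩ : Fin k ↪ ℕ) ⟨m, hm⟩) = l (⟨m, hm⟩ : Fin k).val
      rw [Finsupp.embDomain_apply_self]
      exact Finsupp.equivFunOnFinite_symm_apply_apply _ _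
    · rw [Finsupp.embDomain_notin_range]
      · symm
        by_contra h
        exact hm (Finset.mem_range.mp (hl.2 (Finsupp.mem_support_iff.mpr h)))
      · rintro ⟨i, rfl⟩
        exact hm i.isLt
  · intro v _
    funext i
    show (Finsupp.embDomain ⟨Fin.val, Fin.val_injective⟩ (Finsupp.equivFunOnFinite.symm v)) i.val = v i
    rw [show (i.val : ℕ) = (⟨Fin.val, Fin.val_injective⟩ : Fin k ↪ ℕ) i from rfl,
      Finsupp.embDomain_apply_self]
    exact Finsupp.equivFunOnFinite_symm_apply_apply v i
  · intro l _
    exact (Fin.prod_univ_eq_prod_range (fun m => PowerSeries.coeff (l m) φ) k).symm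

end PS

lemma parts_toFinset_subset {n : ℕ} (lam : Nat.Partition n) : lam.parts.toFinset ⊆ Icc 1 n := by
  intro i hi
  rw [Multiset.mem_toFinset] at hi
  rw [Finset.mem_Icc]
  refine ⟨lam.parts_pos hi, ?_⟩
  have := Multiset.single_le_sum (fun x _ => Nat.zero_le x) i hi
  rwa [lam.parts_sum] at this

lemma prod_eq_of_vm {R : Type*} [CommRing R] {k n : ℕ} (c : ℕ → R) (lam : Nat.Partition n)
    {v : Fin k → ℕ} (hv : vm v = lam.parts) :
    ∏ i : Fin k, c (v i) = ∏ i ∈ Icc 1 n, c i ^ Multiset.count i lam.parts := by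
  classical
  have h1 : ∏ i : Fin k, c (v i) = (Multiset.map c (vm v)).prod := by
    rw [vm, Multiset.map_map]
    rfl
  rw [h1, hv, Finset.prod_multiset_map_count]
  refine Finset.prod_subset (parts_toFinset_subset lam) fun i _ hi => ?_
  rw [Multiset.count_eq_zero_of_notMem (by simpa using hi), pow_zero]

lemma sum_tuple_eq_partition {R : Type*} [CommRing R] (c : ℕ → R) (hc : c 0 = 0) (k n : ℕ) :
    ∑ v ∈ Finset.Nat.antidiagonalTuple k n, ∏ i : Fin k, c (v i)
      = ∑ lam : Nat.Partition n,
          (Ftup k lam.parts).card • ∏ i ∈ Icc 1 n, c i ^ Multiset.count i lam.parts := by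
  classical
  set A := Finset.Nat.antidiagonalTuple k n with hA
  set Ap := A.filter (fun v => (0:ℕ) ∉ vm v) with hAp
  have h0 : ∑ v ∈ Ap, ∏ i : Fin k, c (v i) = ∑ v ∈ A, ∏ i : Fin k, c (v i) := by
    refine Finset.sum_filter_of_ne fun v _ hF => ?_
    intro h0
    obtain ⟨i, hi⟩ := (mem_vm v 0).mp h0
    exact hF (Finset.prod_eq_zero (Finset.mem_univ i) (by rw [hi, hc]))
  have hmemAp : ∀ {v : Fin k → ℕ}, v ∈ Ap ↔ (vm v).sum = n ∧ (0:ℕ) ∉ vm v := by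
    intro v
    rw [hAp, Finset.mem_filter, hA, Finset.Nat.mem_antidiagonalTuple, vm_sum]
  set g : (Fin k → ℕ) → Nat.Partition n := fun v =>
    if h : (vm v).sum = n ∧ (0:ℕ) ∉ vm v then
      ⟨vm v, fun {i} hi => Nat.pos_of_ne_zero (fun e => h.2 (e ▸ hi)), h.1⟩
    else Nat.Partition.indiscrete n with hg
  have hfib : ∀ lam : Nat.Partition n,
      Ap.filter (fun v => g v = lam) = Ftup k lam.parts := by
    intro lam
    ext v
    rw [Finset.mem_filter, mem_Ftup]
    constructor
    · rintro ⟨hv, rfl⟩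
      obtain ⟨h1, h2⟩ := hmemAp.mp hv
      rw [hg]
      simp only [dif_pos (And.intro h1 h2)]
    · intro hv
      have h1 : (vm v).sum = n := by rw [hv, lam.parts_sum]
      have h2 : (0:ℕ) ∉ vm v := fun h => by
        have := lam.parts_pos (hv ▸ h)
        omega
      refine ⟨hmemAp.mpr ⟨h1, h2⟩, ?_⟩
      rw [hg]
      simp only [dif_pos (And.intro h1 h2)]
      exact Nat.Partition.ext hv
  rw [← h0, ← Finset.sum_fiberwise_of_maps_to (fun v _ => Finset.mem_univ (g v))
    (fun v => ∏ i : Fin k, c (v i))]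
  refine Finset.sum_congr rfl fun lam _ => ?_
  rw [hfib lam]
  rw [Finset.sum_congr rfl (fun v hv => prod_eq_of_vm c lam (mem_Ftup.mp hv)),
    Finset.sum_const]

variable {R : Type*} [CommRing R] [Algebra ℚ R]

lemma prod_qsmul {ι : Type*} (s : Finset ι) (q : ι → ℚ) (x : ι → R) :
    ∏ i ∈ s, (q i • x i) = (∏ i ∈ s, q i) • ∏ i ∈ s, x i := by
  classical
  induction s using Finset.cons_induction_on with
  | empty => simp
  | @cons _ _ hj ih => rw [Finset.prod_cons, Finset.prod_cons, Finset.prod_cons, ih, smul_mul_smul_comm]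

lemma key_term (a : ℕ → R) (n k : ℕ) (lam : Nat.Partition n) :
    (k.factorial : ℚ)⁻¹ •
        ((Ftup k lam.parts).card •
          ∏ i ∈ Icc 1 n,
            (if i = 0 then (0:R) else ((i.factorial : ℚ)⁻¹) • a i) ^ Multiset.count i lam.parts)
      = (n.factorial : ℚ)⁻¹ •
          (if Multiset.card lam.parts = k then
            ((n.factorial : ℚ) / ∏ i ∈ Icc 1 n,
                ((i.factorial : ℚ) ^ (Multiset.count i lam.parts) *
                  ((Multiset.count i lam.parts).factorial : ℚ))) •
              ∏ i ∈ Icc 1 n, a i ^ (Multiset.count i lam.parts)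
          else 0) := by
  classical
  by_cases hcard : Multiset.card lam.parts = k
  swap
  · rw [if_neg hcard, smul_zero]
    have hempty : Ftup k lam.parts = ∅ := by
      rw [Finset.eq_empty_iff_forall_notMem]
      intro v hv
      exact hcard (by rw [← mem_Ftup.mp hv, vm_card])
    rw [hempty]
    simp
  rw [if_pos hcard]
  set m : ℕ → ℕ := fun i => Multiset.count i lam.parts with hm
  set P : R := ∏ i ∈ Icc 1 n, a i ^ m i with hP
  set N : ℕ := (Ftup k lam.parts).card with hN
  set M : ℕ := ∏ i ∈ Icc 1 n, (m i).factorial with hM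
  set E : ℚ := ∏ i ∈ Icc 1 n, (i.factorial : ℚ) ^ m i with hE
  have hQ : ∏ i ∈ Icc 1 n,
      (if i = 0 then (0:R) else ((i.factorial : ℚ)⁻¹) • a i) ^ m i = E⁻¹ • P := by
    have h1 : ∀ i ∈ Icc 1 n,
        (if i = 0 then (0:R) else ((i.factorial : ℚ)⁻¹) • a i) ^ m i
          = ((i.factorial : ℚ)⁻¹ ^ m i) • a i ^ m i := by
      intro i hi
      rw [if_neg (by rw [Finset.mem_Icc] at hi; omega), smul_pow]
    rw [Finset.prod_congr rfl h1, prod_qsmul]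
    congr 1
    rw [hE, ← Finset.prod_inv_distrib]
    exact Finset.prod_congr rfl fun i _ => (inv_pow _ _)
  have hNM : (N : ℚ) * (M : ℚ) = (k.factorial : ℚ) := by
    have := Ftup_card k lam.parts hcard
    rw [← prod_count_factorial_subset lam.parts (Icc 1 n) (parts_toFinset_subset lam)] at this
    exact_mod_cast this
  have hDen : ∏ i ∈ Icc 1 n, ((i.factorial : ℚ) ^ m i * ((m i).factorial : ℚ)) = E * M := by
    rw [Finset.prod_mul_distrib, hE, hM]
    push_cast
    ring
  rw [hQ, hDen]
  rw [smul_comm ((k.factorial : ℚ)⁻¹)]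
  rw [← Nat.cast_smul_eq_nsmul ℚ N, smul_smul, smul_smul, smul_smul]
  congr 1
  have hE0 : E ≠ 0 := by
    rw [hE]
    exact Finset.prod_ne_zero_iff.mpr fun i _ => pow_ne_zero _ (Nat.cast_ne_zero.mpr (Nat.factorial_ne_zero _))
  have hM0 : (M : ℚ) ≠ 0 := Nat.cast_ne_zero.mpr (Finset.prod_ne_zero_iff.mpr fun i _ => Nat.factorial_ne_zero _)
  have hk0 : (k.factorial : ℚ) ≠ 0 := Nat.cast_ne_zero.mpr (Nat.factorial_ne_zero _)
  have hn0 : (n.factorial : ℚ) ≠ 0 := Nat.cast_ne_zero.mpr (Nat.factorial_ne_zero _)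
  field_simp
  linear_combination hNM

end FaaAux

open FaaAux in
/-- **Faà di Bruno's formula.**  If `g(x) = Σ_{n≥0} b_n x^n/n!` and
`f(x) = Σ_{n≥1} a_n x^n/n!`, then `(g∘f)(x) = b₀ + Σ_{n≥1}(Σ_{k=1}^n b_k B_{n,k}(a)) x^n/n!`.
Here, since `f` has zero constant term, the composition `g∘f` is the power series whose
`n`-th coefficient is `Σ_{k≤n} (b_k/k!)·[x^n](f^k)`. -/
theorem faa_di_bruno {R : Type*} [CommRing R] [Algebra ℚ R] (a b : ℕ → R) :
    let f : PowerSeries R :=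
      PowerSeries.mk fun n => if n = 0 then 0 else ((n.factorial : ℚ)⁻¹) • a n
    let gf : PowerSeries R :=
      PowerSeries.mk fun n =>
        ∑ k ∈ range (n + 1), ((k.factorial : ℚ)⁻¹) • (b k * PowerSeries.coeff n (f ^ k))
    gf = PowerSeries.mk fun n =>
      if n = 0 then b 0
      else ((n.factorial : ℚ)⁻¹) • ∑ k ∈ Icc 1 n, b k * bellPoly n k a := by
  intro f gf
  refine PowerSeries.ext fun n => ?_
  simp only [gf, PowerSeries.coeff_mk]
  by_cases hn : n = 0
  · subst hn
    simp [f, PowerSeries.coeff_zero_eq_constantCoeff]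
  · rw [if_neg hn]
    have hc : ∀ m : ℕ, PowerSeries.coeff m f
        = (if m = 0 then (0:R) else ((m.factorial : ℚ)⁻¹) • a m) := by
      intro m
      simp only [f, PowerSeries.coeff_mk]
    have hcoeff : ∀ k : ℕ, PowerSeries.coeff n (f ^ k)
        = ∑ lam : Nat.Partition n, (Ftup k lam.parts).card •
            ∏ i ∈ Icc 1 n,
              (if i = 0 then (0:R) else ((i.factorial : ℚ)⁻¹) • a i) ^
                Multiset.count i lam.parts := by
      intro k
      rw [coeff_pow_tuple,
        Finset.sum_congr rfl (fun v _ => Finset.prod_congr rfl fun i _ => by rw [hc])]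
      exact sum_tuple_eq_partition
        (fun i => if i = 0 then (0:R) else ((i.factorial : ℚ)⁻¹) • a i) (by norm_num) k n
    have hkey : ∀ k : ℕ,
        ((k.factorial : ℚ)⁻¹) • (b k * PowerSeries.coeff n (f ^ k))
          = ((n.factorial : ℚ)⁻¹) • (b k * bellPoly n k a) := by
      intro k
      rw [hcoeff k, bellPoly, Finset.mul_sum, Finset.mul_sum, Finset.smul_sum, Finset.smul_sum]
      refine Finset.sum_congr rfl fun lam _ => ?_
      rw [← mul_smul_comm, ← mul_smul_comm]
      exact congrArg (b k * ·) (key_term a n k lam)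
    rw [Finset.sum_congr rfl (fun k _ => hkey k), ← Finset.smul_sum]
    congr 1
    have hbell0 : bellPoly n 0 a = 0 := by
      rw [bellPoly]
      refine Finset.sum_eq_zero fun lam _ => ?_
      rw [if_neg]
      intro h
      have hsum := lam.parts_sum
      rw [Multiset.card_eq_zero.mp h] at hsum
      exact hn (by simpa using hsum.symm)
    rw [Finset.sum_range_succ', hbell0, mul_zero, add_zero,
      show Icc 1 n = Ico 1 (n+1) by rw [Finset.Ico_add_one_right_eq_Icc],
      Finset.sum_Ico_eq_sum_range]
    simp only [Nat.add_sub_cancel]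
    exact Finset.sum_congr rfl fun i _ => by rw [Nat.add_comm 1 i]
end

section
/- Let m ≥ 2 and define ν_m via the recursion ν_m = Σ_{j=1}^{m−1} ν₁^{(j)} · B_{m−1,j}(ν₁,…,ν_{m−j}) in the ring of formal power series ℚ[[t]], with ν₁ = Σ_{n≥2} (−1)^n(n−2)! t^n/n!. Then each ν_m is a power series with integer coefficients n!·[t^n]ν_m ∈ ℤ for all n, and the lowest-order nonvanishing term of ν_m is of order m+1, i.e. [t^n]ν_m = 0 for n ≤ m. -/
open Finset

/-- `ν₁ = Σ_{n≥2} (−1)^n (n−2)! t^n/n! = (1+t)log(1+t) − t ∈ ℚ[[t]]`. -/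
noncomputable def nuOne : PowerSeries ℚ :=
  PowerSeries.mk fun n => if 2 ≤ n then (-1) ^ n * ((n - 2).factorial : ℚ) / (n.factorial : ℚ) else 0

/-- The power series `ν_m ∈ ℚ[[t]]`, defined by
`ν_m = Σ_{j=1}^{m−1} ν₁^{(j)} · B_{m−1,j}(ν₁,…,ν_{m−j})` for `m ≥ 2`.  (The Bell polynomial
`B_{m−1,j}` only depends on its arguments `ν_1, …, ν_{m−j}`, so the guard `i < m` is benign.) -/
noncomputable def nuSeries : ℕ → PowerSeries ℚ
  | 0 => 0
  | 1 => nuOne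
  | (m + 2) =>
      ∑ j ∈ Icc 1 (m + 1),
        (PowerSeries.derivativeFun)^[j] nuOne *
          bellPoly (m + 1) j (fun i => if h : i < m + 2 then nuSeries i else 0)
  termination_by m => m
  decreasing_by omega


namespace NuAux

/-- the subring of integers inside ℚ -/
def R : Subring ℚ := (Int.castRingHom ℚ).range

lemma intCast_mem_R (z : ℤ) : (z : ℚ) ∈ R := ⟨z, rfl⟩
lemma natCast_mem_R (n : ℕ) : (n : ℚ) ∈ R := ⟨n, by push_cast; rfl⟩

/-- Hurwitz integrality -/
def Hur (f : PowerSeries ℚ) : Prop :=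
  ∀ n : ℕ, (n.factorial : ℚ) * PowerSeries.coeff n f ∈ R

/-- coefficients below `a` vanish -/
def OrdGE (a : ℕ) (f : PowerSeries ℚ) : Prop :=
  ∀ n : ℕ, n < a → PowerSeries.coeff n f = 0

lemma hur_zero : Hur 0 := fun n => by simp [Subring.zero_mem]
lemma hur_one : Hur 1 := by
  intro n
  rw [PowerSeries.coeff_one]
  split
  · simpa using natCast_mem_R n.factorial
  · simpa using Subring.zero_mem R
lemma hur_add {f g} (hf : Hur f) (hg : Hur g) : Hur (f + g) := fun n => by
  rw [map_add, mul_add]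
  exact Subring.add_mem R (hf n) (hg n)
lemma hur_mul {f g} (hf : Hur f) (hg : Hur g) : Hur (f * g) := fun n => by
  rw [PowerSeries.coeff_mul, Finset.mul_sum]
  refine Subring.sum_mem R fun p hp => ?_
  rw [Finset.HasAntidiagonal.mem_antidiagonal] at hp
  have hfac : (n.factorial : ℚ) =
      (n.choose p.1 : ℚ) * (p.1.factorial : ℚ) * (p.2.factorial : ℚ) := by
    have h1 : p.1 ≤ n := by omega
    have := Nat.choose_mul_factorial_mul_factorial h1
    have h2 : n - p.1 = p.2 := by omega
    rw [h2] at this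
    exact_mod_cast this.symm
  have : (n.factorial : ℚ) * (PowerSeries.coeff p.1 f * PowerSeries.coeff p.2 g) =
      (n.choose p.1 : ℚ) * ((p.1.factorial : ℚ) * PowerSeries.coeff p.1 f) *
        ((p.2.factorial : ℚ) * PowerSeries.coeff p.2 g) := by
    rw [hfac]; ring
  rw [this]
  exact Subring.mul_mem R (Subring.mul_mem R (natCast_mem_R _) (hf p.1)) (hg p.2)
lemma hur_smul {q : ℚ} (hq : q ∈ R) {f} (hf : Hur f) : Hur (q • f) := fun n => by
  rw [map_smul, smul_eq_mul, mul_left_comm]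
  exact Subring.mul_mem R hq (hf n)
lemma hur_sum {ι : Type*} {s : Finset ι} {f : ι → PowerSeries ℚ}
    (h : ∀ i ∈ s, Hur (f i)) : Hur (∑ i ∈ s, f i) :=
  Finset.sum_induction f Hur (fun _ _ => hur_add) hur_zero h
lemma hur_pow {f} (hf : Hur f) (e : ℕ) : Hur (f ^ e) := by
  induction e with
  | zero => simpa using hur_one
  | succ e ih => rw [pow_succ]; exact hur_mul ih hf
lemma hur_prod {ι : Type*} {s : Finset ι} {f : ι → PowerSeries ℚ}
    (h : ∀ i ∈ s, Hur (f i)) : Hur (∏ i ∈ s, f i) :=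
  Finset.prod_induction f Hur (fun _ _ => hur_mul) hur_one h
lemma coeff_derivFun (f : PowerSeries ℚ) (n : ℕ) :
    PowerSeries.coeff n f.derivativeFun = PowerSeries.coeff (n + 1) f * (n + 1) :=
  PowerSeries.coeff_derivative f n
lemma hur_deriv {f} (hf : Hur f) : Hur f.derivativeFun := fun n => by
  rw [coeff_derivFun]
  have : (n.factorial : ℚ) * (PowerSeries.coeff (n + 1) f * ((n : ℚ) + 1)) =
      ((n + 1).factorial : ℚ) * PowerSeries.coeff (n + 1) f := by
    rw [Nat.factorial_succ]; push_cast; ring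
  rw [this]
  exact hf (n + 1)
lemma coeff_nuOne (n : ℕ) : PowerSeries.coeff n nuOne =
    if 2 ≤ n then (-1) ^ n * ((n - 2).factorial : ℚ) / (n.factorial : ℚ) else 0 :=
  PowerSeries.coeff_mk _ _

lemma hur_nuOne : Hur nuOne := fun n => by
  rw [coeff_nuOne]
  split
  · rename_i hn
    have hfac : (n.factorial : ℚ) ≠ 0 := Nat.cast_ne_zero.mpr n.factorial_pos.ne'
    have : (n.factorial : ℚ) * ((-1) ^ n * ((n - 2).factorial : ℚ) / (n.factorial : ℚ)) =
        ((-1 : ℤ) ^ n * ((n - 2).factorial : ℤ) : ℤ) := by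
      push_cast
      field_simp
    rw [this]
    exact intCast_mem_R _
  · simpa using Subring.zero_mem R

lemma ordGE_zero (a : ℕ) : OrdGE a 0 := fun n _ => by simp
lemma ordGE_bot (f : PowerSeries ℚ) : OrdGE 0 f := fun n h => absurd h (Nat.not_lt_zero n)
lemma ordGE_mono {a b : ℕ} (h : b ≤ a) {f} (hf : OrdGE a f) : OrdGE b f :=
  fun n hn => hf n (lt_of_lt_of_le hn h)
lemma ordGE_sum' : True := trivial
lemma ordGE_add {a f g} (hf : OrdGE a f) (hg : OrdGE a g) : OrdGE a (f + g) := fun n hn => by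
  rw [map_add, hf n hn, hg n hn, add_zero]
lemma ordGE_smul (q : ℚ) {a f} (hf : OrdGE a f) : OrdGE a (q • f) := fun n hn => by
  rw [map_smul, hf n hn, smul_zero]
lemma ordGE_mul {a b f g} (hf : OrdGE a f) (hg : OrdGE b g) : OrdGE (a + b) (f * g) := by
  intro n hn
  rw [PowerSeries.coeff_mul]
  refine Finset.sum_eq_zero fun p hp => ?_
  rw [Finset.HasAntidiagonal.mem_antidiagonal] at hp
  rcases lt_or_ge p.1 a with h | h
  · rw [hf p.1 h, zero_mul]
  · rw [hg p.2 (by omega), mul_zero]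
lemma coeff_mul_bot {a b f g} (hf : OrdGE a f) (hg : OrdGE b g) :
    PowerSeries.coeff (a + b) (f * g) =
      PowerSeries.coeff a f * PowerSeries.coeff b g := by
  rw [PowerSeries.coeff_mul]
  refine Finset.sum_eq_single (a, b) (fun p hp hne => ?_) (fun h => absurd ?_ h)
  · rw [Finset.HasAntidiagonal.mem_antidiagonal] at hp
    rcases lt_or_ge p.1 a with h | h
    · rw [hf p.1 h, zero_mul]
    · have : p.2 < b := by
        rcases Nat.lt_or_ge p.2 b with h2 | h2
        · exact h2
        · exfalso; apply hne
          have : p.1 = a := by omega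
          have : p.2 = b := by omega
          exact Prod.ext (by omega) this
      rw [hg p.2 this, mul_zero]
  · rw [Finset.HasAntidiagonal.mem_antidiagonal]

lemma ord_pow {a : ℕ} {f} (hf : OrdGE a f) (e : ℕ) :
    OrdGE (a * e) (f ^ e) ∧
    PowerSeries.coeff (a * e) (f ^ e) = (PowerSeries.coeff a f) ^ e := by
  induction e with
  | zero => exact ⟨by simpa using ordGE_bot 1, by simp⟩
  | succ e ih =>
    have h1 : OrdGE (a * e + a) (f ^ e * f) := ordGE_mul ih.1 hf
    have h2 := coeff_mul_bot ih.1 hf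
    have he : a * (e + 1) = a * e + a := by ring
    constructor
    · rw [pow_succ, he]; exact h1
    · rw [pow_succ, he, h2, ih.2, pow_succ]

lemma ord_prod {ι : Type*} (s : Finset ι) (f : ι → PowerSeries ℚ) (a e : ι → ℕ)
    (h : ∀ i ∈ s, OrdGE (a i) (f i)) :
    OrdGE (∑ i ∈ s, a i * e i) (∏ i ∈ s, f i ^ e i) ∧
    PowerSeries.coeff (∑ i ∈ s, a i * e i) (∏ i ∈ s, f i ^ e i) =
      ∏ i ∈ s, (PowerSeries.coeff (a i) (f i)) ^ e i := by
  classical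
  induction s using Finset.induction_on with
  | empty => exact ⟨by simpa using ordGE_bot 1, by simp⟩
  | insert _ _ hnotmem ih =>
    rename_i i s
    obtain ⟨ih1, ih2⟩ := ih (fun j hj => h j (Finset.mem_insert_of_mem hj))
    have hi := h i (Finset.mem_insert_self i s)
    have hp := ord_pow hi (e i)
    rw [Finset.sum_insert hnotmem, Finset.prod_insert hnotmem, Finset.prod_insert hnotmem]
    exact ⟨ordGE_mul hp.1 ih1, by rw [coeff_mul_bot hp.1 ih1, hp.2, ih2]⟩

section Partition

variable {m : ℕ} (lam : Nat.Partition m)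

lemma parts_subset_Icc : lam.parts.toFinset ⊆ Icc 1 m := by
  intro i hi
  rw [Multiset.mem_toFinset] at hi
  have h1 : 0 < i := lam.parts_pos hi
  have h2 : i ≤ lam.parts.sum := by
    rw [← Multiset.cons_erase hi, Multiset.sum_cons]
    exact Nat.le_add_right _ _
  rw [lam.parts_sum] at h2
  rw [Finset.mem_Icc]
  omega

lemma sum_count : ∑ i ∈ Icc 1 m, Multiset.count i lam.parts = Multiset.card lam.parts := by
  rw [← Multiset.toFinset_sum_count_eq]
  exact (Finset.sum_subset (parts_subset_Icc lam) (fun i _ hni =>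
    Multiset.count_eq_zero_of_notMem (fun h => hni (Multiset.mem_toFinset.mpr h)))).symm

lemma sum_mul_count : ∑ i ∈ Icc 1 m, i * Multiset.count i lam.parts = m := by
  have key : ∑ i ∈ lam.parts.toFinset, i * Multiset.count i lam.parts = m := by
    conv_rhs => rw [← lam.parts_sum,
      ← Multiset.toFinset_sum_count_nsmul_eq lam.parts]
    rw [Multiset.sum_sum]
    refine Finset.sum_congr rfl fun i _ => ?_
    rw [Multiset.sum_nsmul, Multiset.sum_singleton, smul_eq_mul, mul_comm]
  have hsub : ∑ i ∈ lam.parts.toFinset, i * Multiset.count i lam.parts =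
      ∑ i ∈ Icc 1 m, i * Multiset.count i lam.parts :=
    Finset.sum_subset (parts_subset_Icc lam) (fun i _ hni => by
      rw [Multiset.count_eq_zero_of_notMem (fun h => hni (Multiset.mem_toFinset.mpr h)),
        mul_zero])
  rw [← hsub]
  exact key

lemma denom_dvd :
    (∏ i ∈ Icc 1 m, (i.factorial ^ Multiset.count i lam.parts *
      (Multiset.count i lam.parts).factorial)) ∣ m.factorial := by
  have step1 : (∏ i ∈ Icc 1 m, (i.factorial ^ Multiset.count i lam.parts *
      (Multiset.count i lam.parts).factorial)) ∣
      ∏ i ∈ Icc 1 m, (Multiset.count i lam.parts * i).factorial := by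
    refine Finset.prod_dvd_prod_of_dvd _ _ fun i hi => ?_
    have hi0 : i ≠ 0 := by
      rw [Finset.mem_Icc] at hi; omega
    have := Nat.uniformBell_mul_eq (Multiset.count i lam.parts) hi0
    exact ⟨Nat.uniformBell (Multiset.count i lam.parts) i, by rw [← this]; ring⟩
  have step2 : (∏ i ∈ Icc 1 m, (Multiset.count i lam.parts * i).factorial) ∣
      (∑ i ∈ Icc 1 m, Multiset.count i lam.parts * i).factorial :=
    Nat.prod_factorial_dvd_factorial_sum _ _
  have hsum : ∑ i ∈ Icc 1 m, Multiset.count i lam.parts * i = m :=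
    (Finset.sum_congr rfl fun i _ => mul_comm _ _).trans (sum_mul_count lam)
  have := dvd_trans step1 step2
  rwa [hsum] at this

lemma denom_cast :
    (∏ i ∈ Icc 1 m, ((i.factorial : ℚ) ^ (Multiset.count i lam.parts) *
        ((Multiset.count i lam.parts).factorial : ℚ))) =
    ((∏ i ∈ Icc 1 m, (i.factorial ^ Multiset.count i lam.parts *
      (Multiset.count i lam.parts).factorial) : ℕ) : ℚ) := by
  push_cast
  rfl

lemma bell_scalar_mem_R :
    ((m.factorial : ℚ) / ∏ i ∈ Icc 1 m,
      ((i.factorial : ℚ) ^ (Multiset.count i lam.parts) *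
        ((Multiset.count i lam.parts).factorial : ℚ))) ∈ R := by
  have hpos : 0 < ∏ i ∈ Icc 1 m, (i.factorial ^ Multiset.count i lam.parts *
      (Multiset.count i lam.parts).factorial) :=
    Finset.prod_pos fun i _ => Nat.mul_pos (pow_pos i.factorial_pos _) (Nat.factorial_pos _)
  rw [denom_cast lam, ← Nat.cast_div (denom_dvd lam) (Nat.cast_ne_zero.mpr hpos.ne')]
  exact natCast_mem_R _

lemma bell_scalar_pos :
    0 < ((m.factorial : ℚ) / ∏ i ∈ Icc 1 m,
      ((i.factorial : ℚ) ^ (Multiset.count i lam.parts) *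
        ((Multiset.count i lam.parts).factorial : ℚ))) := by
  apply div_pos
  · exact_mod_cast m.factorial_pos
  · refine Finset.prod_pos fun i _ => mul_pos (pow_pos ?_ _) ?_
    · exact_mod_cast i.factorial_pos
    · exact_mod_cast (Multiset.count i lam.parts).factorial_pos

end Partition

lemma ordGE_sum {ι : Type*} {s : Finset ι} {a : ℕ} {f : ι → PowerSeries ℚ}
    (h : ∀ i ∈ s, OrdGE a (f i)) : OrdGE a (∑ i ∈ s, f i) :=
  Finset.sum_induction f (OrdGE a) (fun _ _ => ordGE_add) (ordGE_zero a) h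

section Bell

variable {m j : ℕ} {f : ℕ → PowerSeries ℚ}

lemma bell_degree (lam : Nat.Partition m) (hcard : Multiset.card lam.parts = j) :
    ∑ i ∈ Icc 1 m, (i + 1) * Multiset.count i lam.parts = m + j := by
  have h1 := sum_mul_count lam
  have h2 := sum_count lam
  rw [hcard] at h2
  calc ∑ i ∈ Icc 1 m, (i + 1) * Multiset.count i lam.parts
      = ∑ i ∈ Icc 1 m, (i * Multiset.count i lam.parts + Multiset.count i lam.parts) :=
        Finset.sum_congr rfl fun i _ => by ring
    _ = m + j := by rw [Finset.sum_add_distrib, h1, h2]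

lemma hur_bell (hHur : ∀ i ∈ Icc 1 m, Hur (f i)) : Hur (bellPoly m j f) := by
  rw [bellPoly]
  refine hur_sum fun lam _ => ?_
  split
  · exact hur_smul (bell_scalar_mem_R lam) (hur_prod fun i hi => hur_pow (hHur i hi) _)
  · exact hur_zero

lemma ordGE_bell (hOrd : ∀ i ∈ Icc 1 m, OrdGE (i + 1) (f i)) :
    OrdGE (m + j) (bellPoly m j f) := by
  rw [bellPoly]
  refine ordGE_sum fun lam _ => ?_
  split
  · rename_i hcard
    refine ordGE_smul _ ?_
    rw [← bell_degree lam hcard]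
    exact (ord_prod (Icc 1 m) f (fun i => i + 1) _ hOrd).1
  · exact ordGE_zero _

lemma bell_term_coeff (hOrd : ∀ i ∈ Icc 1 m, OrdGE (i + 1) (f i)) (lam : Nat.Partition m) :
    PowerSeries.coeff (m + j)
      (if Multiset.card lam.parts = j then
        ((m.factorial : ℚ) / ∏ i ∈ Icc 1 m,
            ((i.factorial : ℚ) ^ (Multiset.count i lam.parts) *
              ((Multiset.count i lam.parts).factorial : ℚ))) •
          ∏ i ∈ Icc 1 m, f i ^ (Multiset.count i lam.parts)
      else 0) =
    (if Multiset.card lam.parts = j then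
      ((m.factorial : ℚ) / ∏ i ∈ Icc 1 m,
          ((i.factorial : ℚ) ^ (Multiset.count i lam.parts) *
            ((Multiset.count i lam.parts).factorial : ℚ))) *
        ∏ i ∈ Icc 1 m, (PowerSeries.coeff (i + 1) (f i)) ^ (Multiset.count i lam.parts)
    else 0) := by
  split
  · rename_i hcard
    rw [map_smul, smul_eq_mul]
    congr 1
    rw [← bell_degree lam hcard]
    exact (ord_prod (Icc 1 m) f (fun i => i + 1) _ hOrd).2
  · simp

lemma bell_coeff_nonneg (hOrd : ∀ i ∈ Icc 1 m, OrdGE (i + 1) (f i))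
    (hPos : ∀ i ∈ Icc 1 m, 0 < PowerSeries.coeff (i + 1) (f i)) :
    0 ≤ PowerSeries.coeff (m + j) (bellPoly m j f) := by
  rw [bellPoly, map_sum]
  refine Finset.sum_nonneg fun lam _ => ?_
  rw [bell_term_coeff hOrd lam]
  split
  · refine mul_nonneg (bell_scalar_pos lam).le
      (Finset.prod_nonneg fun i hi => pow_nonneg (hPos i hi).le _)
  · exact le_refl 0

lemma bell_coeff_pos (hm : m ≠ 0) (hOrd : ∀ i ∈ Icc 1 m, OrdGE (i + 1) (f i))
    (hPos : ∀ i ∈ Icc 1 m, 0 < PowerSeries.coeff (i + 1) (f i)) :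
    0 < PowerSeries.coeff (m + 1) (bellPoly m 1 f) := by
  rw [bellPoly, map_sum]
  refine Finset.sum_pos' (fun lam _ => ?_) ⟨Nat.Partition.indiscrete m, Finset.mem_univ _, ?_⟩
  · rw [bell_term_coeff hOrd lam]
    split
    · exact mul_nonneg (bell_scalar_pos lam).le
        (Finset.prod_nonneg fun i hi => pow_nonneg (hPos i hi).le _)
    · exact le_refl 0
  · rw [bell_term_coeff hOrd _]
    rw [if_pos (by rw [Nat.Partition.indiscrete_parts hm]; simp)]
    exact mul_pos (bell_scalar_pos _)
      (Finset.prod_pos fun i hi => pow_pos (hPos i hi) _)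

end Bell

lemma ordGE_nuOne : OrdGE 2 nuOne := by
  intro n hn
  rw [coeff_nuOne, if_neg (by omega)]

lemma coeff_two_nuOne : PowerSeries.coeff 2 nuOne = 1/2 := by
  rw [coeff_nuOne, if_pos (by norm_num)]
  norm_num [Nat.factorial]

lemma hur_derivIter (j : ℕ) : Hur ((PowerSeries.derivativeFun)^[j] nuOne) := by
  induction j with
  | zero => exact hur_nuOne
  | succ j ih => rw [Function.iterate_succ_apply']; exact hur_deriv ih

lemma ordGE_deriv_nuOne : OrdGE 1 ((PowerSeries.derivativeFun)^[1] nuOne) := by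
  intro n hn
  interval_cases n
  rw [Function.iterate_one, coeff_derivFun, ordGE_nuOne 1 (by omega), zero_mul]

lemma coeff_one_deriv_nuOne :
    PowerSeries.coeff 1 ((PowerSeries.derivativeFun)^[1] nuOne) = 1 := by
  rw [Function.iterate_one, coeff_derivFun, coeff_two_nuOne]
  norm_num

lemma coeff_zero_deriv2_nuOne :
    PowerSeries.coeff 0 ((PowerSeries.derivativeFun)^[2] nuOne) = 1 := by
  rw [show (2:ℕ) = 1 + 1 from rfl, Function.iterate_succ_apply',
    coeff_derivFun, coeff_one_deriv_nuOne]
  norm_num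

theorem key : ∀ m, 1 ≤ m → Hur (nuSeries m) ∧ OrdGE (m + 1) (nuSeries m) ∧
    0 < PowerSeries.coeff (m + 1) (nuSeries m) := by
  intro m
  induction m using Nat.strong_induction_on with
  | _ m IH =>
    match m with
    | 0 => exact fun h => absurd h (by omega)
    | 1 =>
      intro _
      have h1 : nuSeries 1 = nuOne := by rw [nuSeries]
      rw [h1]
      exact ⟨hur_nuOne, ordGE_nuOne, by rw [coeff_two_nuOne]; norm_num⟩
    | (M + 2) =>
      intro _
      have hdef : nuSeries (M + 2) = ∑ j ∈ Icc 1 (M + 1),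
          (PowerSeries.derivativeFun)^[j] nuOne *
            bellPoly (M + 1) j (fun i => if h : i < M + 2 then nuSeries i else 0) := by
        rw [nuSeries]
      have hOrd : ∀ i ∈ Icc 1 (M + 1),
          OrdGE (i + 1) (if h : i < M + 2 then nuSeries i else 0) := by
        intro i hi
        rw [Finset.mem_Icc] at hi
        rw [dif_pos (by omega)]
        exact (IH i (by omega) (by omega)).2.1
      have hHur : ∀ i ∈ Icc 1 (M + 1),
          Hur (if h : i < M + 2 then nuSeries i else 0) := by
        intro i hi
        rw [Finset.mem_Icc] at hi
        rw [dif_pos (by omega)]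
        exact (IH i (by omega) (by omega)).1
      have hPos : ∀ i ∈ Icc 1 (M + 1),
          0 < PowerSeries.coeff (i + 1) (if h : i < M + 2 then nuSeries i else 0) := by
        intro i hi
        rw [Finset.mem_Icc] at hi
        rw [dif_pos (by omega)]
        exact (IH i (by omega) (by omega)).2.2
      refine ⟨?_, ?_, ?_⟩
      · rw [hdef]
        exact hur_sum fun j _ => hur_mul (hur_derivIter j) (hur_bell hHur)
      · rw [hdef]
        refine ordGE_sum fun j hj => ?_
        rw [Finset.mem_Icc] at hj
        by_cases hj1 : j = 1
        · subst hj1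
          exact ordGE_mono (by omega)
            (ordGE_mul ordGE_deriv_nuOne (ordGE_bell hOrd))
        · exact ordGE_mono (by omega)
            (ordGE_mul (ordGE_bot ((PowerSeries.derivativeFun)^[j] nuOne)) (ordGE_bell hOrd))
      · rw [hdef, map_sum]
        have hterm1 : 0 < PowerSeries.coeff (M + 2 + 1)
            ((PowerSeries.derivativeFun)^[1] nuOne *
              bellPoly (M + 1) 1 (fun i => if h : i < M + 2 then nuSeries i else 0)) := by
          rw [show M + 2 + 1 = 1 + (M + 1 + 1) by omega,
            coeff_mul_bot ordGE_deriv_nuOne (ordGE_bell hOrd), coeff_one_deriv_nuOne, one_mul]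
          exact bell_coeff_pos (by omega) hOrd hPos
        refine Finset.sum_pos' (fun j hj => ?_) ⟨1, Finset.mem_Icc.mpr (by omega), hterm1⟩
        rw [Finset.mem_Icc] at hj
        by_cases hj1 : j = 1
        · subst hj1; exact hterm1.le
        · by_cases hj2 : j = 2
          · subst hj2
            rw [show M + 2 + 1 = 0 + (M + 1 + 2) by omega,
              coeff_mul_bot (ordGE_bot _) (ordGE_bell hOrd), coeff_zero_deriv2_nuOne, one_mul]
            exact bell_coeff_nonneg hOrd hPos
          · have h3 : (3:ℕ) ≤ j := by omega
            have hz := ordGE_mul (ordGE_bot ((PowerSeries.derivativeFun)^[j] nuOne))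
              (ordGE_bell (j := j) hOrd)
            rw [hz (M + 2 + 1) (by omega)]

end NuAux

/-- Each `ν_m` (for `m ≥ 1`) has integer coefficients in the sense that `n!·[t^n]ν_m ∈ ℤ`,
and its lowest-order nonvanishing term is of order `m+1`: `[t^n]ν_m = 0` for `n ≤ m`,
while `[t^{m+1}]ν_m ≠ 0`. -/
theorem nuSeries_integrality_and_order (m : ℕ) (hm : 1 ≤ m) :
    (∀ n : ℕ, ∃ z : ℤ, (n.factorial : ℚ) * PowerSeries.coeff n (nuSeries m) = (z : ℚ)) ∧
    (∀ n : ℕ, n ≤ m → PowerSeries.coeff n (nuSeries m) = 0) ∧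
    PowerSeries.coeff (m + 1) (nuSeries m) ≠ 0 := by
  obtain ⟨h1, h2, h3⟩ := NuAux.key m hm
  refine ⟨fun n => ?_, fun n hn => h2 n (by omega), ne_of_gt h3⟩
  obtain ⟨z, hz⟩ := h1 n
  exact ⟨z, hz.symm⟩
end
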